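/- If Y_1, …, Y_ν (ν ≥ 3) are i.i.d. real random variables with continuous (atomless) distribution, then almost surely the empirical CART criterion L(κ) = (κ(ν−κ)/ν)·((1/κ)∑_{λ≤κ} Y_λ − (1/(ν−κ))∑_{λ>κ} Y_λ)² is not constant as a function of κ ∈ {1,…,ν−1}. -/

import Mathlib

open MeasureTheory ProbabilityTheory

lemma quad_fin (a b c : ℝ) (ha : a ≠ 0) : {t : ℝ | a*t^2 + b*t + c = 0}.Finite := by
  have hP : (Polynomial.C a * Polynomial.X^2 + Polynomial.C b * Polynomial.X + Polynomial.C c) ≠ 0 := fun h => by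
    have := congrArg (fun p => Polynomial.coeff p 2) h
    simp [Polynomial.coeff_C] at this
    exact ha this
  have := Polynomial.finite_setOf_isRoot hP
  convert this using 2 with t
  simp [Polynomial.IsRoot]

theorem stmt2 {Ω : Type*} [MeasurableSpace Ω] (μ : Measure Ω) [IsProbabilityMeasure μ]
    (n : ℕ) (hn : 3 ≤ n) (Y : ℕ → Ω → ℝ) (hmeas : ∀ i, Measurable (Y i))
    (hindep : iIndepFun Y μ)
    (ν₀ : Measure ℝ) (hid : ∀ i, μ.map (Y i) = ν₀) [NullSingletonClass ν₀] :
    μ {ω | ∃ K : ℝ, ∀ κ ∈ Finset.Icc 1 (n - 1),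
      ((κ : ℝ) * ((n : ℝ) - κ) / n) *
        ((1 / (κ : ℝ)) * ∑ l ∈ Finset.Icc 1 κ, Y l ω
          - (1 / ((n : ℝ) - κ)) * ∑ l ∈ Finset.Icc (κ + 1) n, Y l ω) ^ 2 = K} = 0 := by
  set m : ℝ := (n : ℝ) with hm_def
  have hm : 3 ≤ m := by rw [hm_def]; exact_mod_cast hn
  have hm0 : m ≠ 0 := by linarith
  have hm1 : m - 1 ≠ 0 := by linarith
  have hm2 : m - 2 ≠ 0 := by linarith
  have ha : m*(m-1)*(m-2) ≠ 0 := by positivity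
  -- the quadratic map
  set q : (ℝ × ℝ) × ℝ → ℝ := fun p =>
    m*(m-1)*(m-2) * p.2^2
      + (-2*(m-1)*(m-2)*(2*(p.1.1+p.1.2) + ((m-2)*p.1.1 - 2*p.1.2))) * p.2
      + (2*(m-2)*(p.1.1+p.1.2)^2 - (m-1)*((m-2)*p.1.1 - 2*p.1.2)^2) with hq_def
  have hqm : Measurable q := by fun_prop
  set Z : Ω → ℝ × ℝ := fun ω => (Y 2 ω, ∑ l ∈ Finset.Icc 3 n, Y l ω) with hZ_def
  have hZmeas : Measurable Z :=
    (hmeas 2).prodMk (Finset.measurable_sum _ fun i _ => hmeas i)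
  -- independence of Z and Y 1
  have h2mem : 2 ∈ Finset.Icc 2 n := by simp; omega
  have hST : Disjoint (Finset.Icc 2 n) ({1} : Finset ℕ) := by
    simp [Finset.disjoint_left]; omega
  have h0 := hindep.indepFun_finset (Finset.Icc 2 n) {1} hST hmeas
  set φ : (↥(Finset.Icc 2 n) → ℝ) → ℝ × ℝ := fun v =>
    (v ⟨2, h2mem⟩, ∑ i : ↥(Finset.Icc 2 n), if 3 ≤ (i : ℕ) then v i else 0) with hφ_def
  set ψ : (↥({1} : Finset ℕ) → ℝ) → ℝ := fun v => v ⟨1, by simp⟩ with hψ_def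
  have hφ : Measurable φ := by
    apply Measurable.prodMk (measurable_pi_apply _)
    apply Finset.measurable_sum
    intro i _
    split_ifs
    · exact measurable_pi_apply _
    · exact measurable_const
  have hψ : Measurable ψ := measurable_pi_apply _
  have hInd : IndepFun Z (Y 1) μ := by
    have hI := h0.comp hφ hψ
    have hφeq : (φ ∘ fun a (i : ↥(Finset.Icc 2 n)) => Y i a) = Z := by
      funext ω
      simp only [Function.comp, hφ_def, hZ_def]
      congr 1
      rw [Finset.sum_coe_sort (Finset.Icc 2 n) (fun i => if 3 ≤ i then Y i ω else 0),
        ← Finset.sum_filter]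
      congr 1
      ext i
      simp only [Finset.mem_filter, Finset.mem_Icc]
      omega
    have hψeq : (ψ ∘ fun a (i : ↥({1} : Finset ℕ)) => Y i a) = Y 1 := rfl
    rwa [hφeq, hψeq] at hI
  -- measure computation
  haveI : IsProbabilityMeasure ν₀ := by
    rw [← hid 1]; exact Measure.isProbabilityMeasure_map (hmeas 1).aemeasurable
  have hmap : μ.map (fun ω => (Z ω, Y 1 ω)) = (μ.map Z).prod ν₀ := by
    rw [← hid 1]
    exact (indepFun_iff_map_prod_eq_prod_map_map hZmeas.aemeasurable
      (hmeas 1).aemeasurable).mp hInd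
  set s : Set ((ℝ × ℝ) × ℝ) := q ⁻¹' {0} with hs_def
  have hs : MeasurableSet s := hqm (measurableSet_singleton 0)
  have hE0 : μ ((fun ω => (Z ω, Y 1 ω)) ⁻¹' s) = 0 := by
    rw [← Measure.map_apply (hZmeas.prodMk (hmeas 1)) hs, hmap, Measure.prod_apply hs]
    have : ∀ z : ℝ × ℝ, ν₀ (Prod.mk z ⁻¹' s) = 0 := by
      intro z
      have hfin : (Prod.mk z ⁻¹' s).Finite := by
        have := quad_fin (m*(m-1)*(m-2))
          (-2*(m-1)*(m-2)*(2*(z.1+z.2) + ((m-2)*z.1 - 2*z.2)))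
          (2*(m-2)*(z.1+z.2)^2 - (m-1)*((m-2)*z.1 - 2*z.2)^2) ha
        exact this
      exact hfin.measure_zero ν₀
    simp [this]
  refine measure_mono_null ?_ hE0
  rintro ω ⟨K, hK⟩
  have h1 := hK 1 (by simp; omega)
  have h2 := hK 2 (by simp; omega)
  rw [← h2] at h1
  -- rewrite the sums
  have e1 : Finset.Icc 1 1 = ({1} : Finset ℕ) := Finset.Icc_self 1
  have e2 : Finset.Icc 1 2 = ({1, 2} : Finset ℕ) := by decide
  have e3 : Finset.Icc 2 n = insert 2 (Finset.Icc 3 n) := by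
    ext i; simp; omega
  have h2n : (2 : ℕ) ∉ Finset.Icc 3 n := by simp
  rw [e1, e3, Finset.sum_singleton, Finset.sum_insert h2n] at h1
  rw [e2, Finset.sum_insert (by simp), Finset.sum_singleton,
    show (2:ℕ)+1 = 3 from rfl] at h1
  push_cast at h1
  set t := Y 1 ω
  set y := Y 2 ω
  set r := ∑ l ∈ Finset.Icc 3 n, Y l ω
  simp only [Set.mem_preimage, hs_def, hq_def, hZ_def, Set.mem_singleton_iff, Set.mem_setOf_eq]
  have hQ : m*(m-1)*(m-2) * t^2 + (-2*(m-1)*(m-2)*(2*(y+r) + ((m-2)*y - 2*r))) * t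
      + (2*(m-2)*(y+r)^2 - (m-1)*((m-2)*y - 2*r)^2)
    = 2*m*(m-1)*(m-2) * ((1 * (m-1) / m) * ((1/(1:ℝ)) * t - (1/(m-1)) * (y + r))^2
       - (2 * (m-2) / m) * ((1/(2:ℝ)) * (t + y) - (1/(m-2)) * r)^2) := by
    field_simp
    ring
  have h1' : (1 * (m-1) / m) * ((1/(1:ℝ)) * t - (1/(m-1)) * (y + r))^2
       - (2 * (m-2) / m) * ((1/(2:ℝ)) * (t + y) - (1/(m-2)) * r)^2 = 0 := by
    rw [sub_eq_zero]
    convert h1 using 2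
  rw [hQ, h1', mul_zero]
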